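/- If sequences (a_n), (b_n), (c_n) satisfy a_n = b_n + c_n for all n ≥ 1, b_1 = 1, c_1 = 0, b_n = a_{n−1} for n ≥ 2, and c_n = Σ_{k=1}^{n−1} b_k a_{n−k} for n ≥ 2, then a_n equals the number of planar rooted forests with n vertices (i.e., the Catalan number c_{n+1} with n+1 leaves), since the generating series satisfies X·A(X)² + (2X−1)·A(X) + X = 0. -/

import Mathlib

/-- Planar rooted trees. -/
inductive PTree : Type
  | node : List PTree → PTree

abbrev Forest : Type := List PTree

mutual
def PTree.weight : PTree → ℕ
  | .node c => 1 + Forest.weight c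
def Forest.weight : Forest → ℕ
  | [] => 0
  | t :: r => PTree.weight t + Forest.weight r
end

def Forest.toB : Forest → Tree Unit
  | [] => Tree.nil
  | .node c :: r => Tree.node () (Forest.toB c) (Forest.toB r)

def Forest.ofB : Tree Unit → Forest
  | .nil => []
  | .node _ l r => PTree.node (Forest.ofB l) :: Forest.ofB r

lemma Forest.toB_ofB : ∀ t, Forest.toB (Forest.ofB t) = t
  | .nil => by simp [Forest.ofB, Forest.toB]
  | .node _ l r => by simp [Forest.ofB, Forest.toB, toB_ofB l, toB_ofB r]

lemma Forest.ofB_toB : ∀ F : Forest, Forest.ofB (Forest.toB F) = F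
  | [] => by simp [Forest.toB, Forest.ofB, Forest.weight, Tree.numNodes]
  | .node c :: r => by simp [Forest.toB, Forest.ofB, ofB_toB c, ofB_toB r]

lemma Forest.numNodes_toB : ∀ F : Forest, (Forest.toB F).numNodes = Forest.weight F
  | [] => by simp [Forest.toB, Forest.ofB, Forest.weight, Tree.numNodes]
  | .node c :: r => by
      simp [Forest.toB, Tree.numNodes, numNodes_toB c, numNodes_toB r,
        PTree.weight, Forest.weight]
      omega

lemma card_forest (n : ℕ) : Nat.card {F : Forest // Forest.weight F = n} = catalan n := by
  have e : {F : Forest // Forest.weight F = n} ≃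
      {t : Tree Unit // t ∈ Tree.treesOfNumNodesEq n} :=
    { toFun := fun F => ⟨Forest.toB F.1, by
        rw [BinaryTree.mem_treesOfNumNodesEq]; exact (Forest.numNodes_toB _).trans F.2⟩
      invFun := fun t => ⟨Forest.ofB t.1, by
        have := BinaryTree.mem_treesOfNumNodesEq.mp t.2
        rw [← Forest.numNodes_toB, Forest.toB_ofB]; exact this⟩
      left_inv := fun F => by simp [Forest.ofB_toB]
      right_inv := fun t => by simp [Forest.toB_ofB] }
  rw [Nat.card_congr e, Nat.card_eq_finsetCard, BinaryTree.treesOfNumNodesEq_card_eq_catalan]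

section
variable (a b c : ℕ → ℕ)
    (habc : ∀ n, 1 ≤ n → a n = b n + c n)
    (hb1 : b 1 = 1) (hc1 : c 1 = 0)
    (hb : ∀ n, 2 ≤ n → b n = a (n - 1))
    (hc : ∀ n, 2 ≤ n → c n = ∑ k ∈ Finset.Icc 1 (n - 1), b k * a (n - k))

include habc hb1 hc1 hb hc

lemma key : ∀ m : ℕ, a (m + 1) =
    ∑ k ∈ Finset.range (m + 1),
      (if k = 0 then 1 else a k) * (if m - k = 0 then 1 else a (m - k)) := by
  intro m
  match m with
  | 0 => simp [habc 1 le_rfl, hb1, hc1]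
  | l + 1 =>
    set m := l + 1 with hm
    have h1 : a (m + 1) = a m + ∑ k ∈ Finset.Icc 1 m, b k * a (m + 1 - k) := by
      rw [habc (m + 1) (by omega), hb (m + 1) (by omega), hc (m + 1) (by omega)]
      simp
    rw [h1, Finset.sum_range_succ]
    have h2 : ∑ k ∈ Finset.Icc 1 m, b k * a (m + 1 - k) =
        ∑ i ∈ Finset.range m, (if i = 0 then 1 else a i) *
          (if m - i = 0 then 1 else a (m - i)) := by
      have : Finset.Icc 1 m = Finset.Ico 1 (m + 1) := by
        rw [Finset.Ico_add_one_right_eq_Icc]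
      rw [this, Finset.sum_Ico_eq_sum_range]
      simp only [Nat.add_sub_cancel]
      apply Finset.sum_congr (by norm_num)
      intro i hi
      have hi' : i < m := Finset.mem_range.mp hi
      have hmi : m - i ≠ 0 := by omega
      rw [if_neg hmi]
      have : m + 1 - (1 + i) = m - i := by omega
      rw [this]
      rcases Nat.eq_zero_or_pos i with h0 | h0
      · subst h0; simp [hb1]
      · rw [if_neg (by omega), hb (1 + i) (by omega)]
        congr 2
        omega
    rw [h2]
    simp
    ring

lemma acat : ∀ n : ℕ, (if n = 0 then 1 else a n) = catalan n := by
  intro n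
  induction n using Nat.strong_induction_on with
  | _ n ih =>
    match n with
    | 0 => simp
    | m + 1 =>
      rw [if_neg (by omega), key a b c habc hb1 hc1 hb hc m, catalan_succ',
        Finset.Nat.sum_antidiagonal_eq_sum_range_succ_mk]
      apply Finset.sum_congr rfl
      intro k hk
      have hk' : k < m + 1 := Finset.mem_range.mp hk
      rw [← ih k (by omega), ← ih (m - k) (by omega)]

end


/-- If `a_n = b_n + c_n`, `b_1 = 1`, `c_1 = 0`, `b_n = a_{n−1}` for `n ≥ 2` and
`c_n = Σ_{k=1}^{n−1} b_k a_{n−k}` for `n ≥ 2`, then the generating series of `a`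
satisfies `X·A² + (2X−1)·A + X = 0` and `a_n` is the number of planar rooted
forests with `n` vertices. -/
theorem admissible_trees_count (a b c : ℕ → ℕ)
    (habc : ∀ n, 1 ≤ n → a n = b n + c n)
    (hb1 : b 1 = 1) (hc1 : c 1 = 0)
    (hb : ∀ n, 2 ≤ n → b n = a (n - 1))
    (hc : ∀ n, 2 ≤ n → c n = ∑ k ∈ Finset.Icc 1 (n - 1), b k * a (n - k)) :
    (PowerSeries.X * (PowerSeries.mk (fun n => if n = 0 then 0 else (a n : ℚ))) ^ 2 +
        (2 * PowerSeries.X - 1) * PowerSeries.mk (fun n => if n = 0 then 0 else (a n : ℚ)) +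
        PowerSeries.X = 0) ∧
      ∀ n, 1 ≤ n → a n = Nat.card {F : Forest // Forest.weight F = n} := by
  have hkey := key a b c habc hb1 hc1 hb hc
  have ha1 : a 1 = 1 := by rw [habc 1 le_rfl, hb1, hc1]
  constructor
  · set A := PowerSeries.mk (fun n => if n = 0 then 0 else (a n : ℚ)) with hA
    have hexp : PowerSeries.X * A ^ 2 + (2 * PowerSeries.X - 1) * A + PowerSeries.X
        = PowerSeries.X * (A * A) + (PowerSeries.X * A + PowerSeries.X * A) +
          PowerSeries.X - A := by ring
    rw [hexp]
    ext n
    rcases n with _ | m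
    · simp [hA, PowerSeries.coeff_zero_eq_constantCoeff, map_sub, map_add, map_mul,
        PowerSeries.constantCoeff_mk]
    · rw [map_zero, map_sub, map_add, map_add, map_add, PowerSeries.coeff_succ_X_mul,
        PowerSeries.coeff_succ_X_mul, PowerSeries.coeff_mul,
        PowerSeries.coeff_X]
      simp only [hA, PowerSeries.coeff_mk]
      rcases m with _ | l
      · simp [ha1]
      · rw [Finset.Nat.sum_antidiagonal_eq_sum_range_succ_mk]
        have hD : ∑ k ∈ Finset.range (l + 2),
            (if k = 0 then (0:ℚ) else a k) *
              (if l + 1 - k = 0 then (0:ℚ) else a (l + 1 - k)) =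
            ∑ k ∈ Finset.range l, (a (k + 1) : ℚ) * a (l - k) := by
          rw [Finset.sum_range_succ', Finset.sum_range_succ]
          have e1 : ∀ k ∈ Finset.range l,
              (if k + 1 = 0 then (0:ℚ) else a (k + 1)) *
                (if l + 1 - (k + 1) = 0 then (0:ℚ) else a (l + 1 - (k + 1))) =
              (a (k + 1) : ℚ) * a (l - k) := by
            intro k hk
            have hk' := Finset.mem_range.mp hk
            rw [show l + 1 - (k + 1) = l - k from by omega, if_neg (by omega),
              if_neg (by omega)]
          rw [Finset.sum_congr rfl e1]
          simp
        have hS : (a (l + 2) : ℚ) =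
            ∑ k ∈ Finset.range l, (a (k + 1) : ℚ) * a (l - k) + a (l + 1) + a (l + 1) := by
          have h := congrArg (Nat.cast : ℕ → ℚ) (hkey (l + 1))
          push_cast at h
          rw [Finset.sum_range_succ', Finset.sum_range_succ] at h
          have e1 : ∀ k ∈ Finset.range l,
              (if k + 1 = 0 then (1:ℚ) else a (k + 1)) *
                (if l + 1 - (k + 1) = 0 then (1:ℚ) else a (l + 1 - (k + 1))) =
              (a (k + 1) : ℚ) * a (l - k) := by
            intro k hk
            have hk' := Finset.mem_range.mp hk
            rw [show l + 1 - (k + 1) = l - k from by omega, if_neg (by omega),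
              if_neg (by omega)]
          rw [Finset.sum_congr rfl e1] at h
          simp at h
          rw [show l + 1 + 1 = l + 2 from rfl] at h
          linarith [h]
        rw [hD]
        rw [show l + 1 + 1 = l + 2 from rfl, if_neg (show ¬ (l + 2 = 1) by omega),
          if_neg (show ¬ (l + 2 = 0) by omega),
          if_neg (show ¬ (l + 1 = 0) by omega)]
        linarith [hS]
  · intro n hn
    rw [card_forest]
    have h := acat a b c habc hb1 hc1 hb hc n
    rwa [if_neg (by omega)] at h
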